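/- arXiv:1704.05265 — 2 statements merged into one kernel-verified Lean document; each statement's English description precedes it below -/
import Mathlib

section
/- Let 0 < n < m be integers, let y₀ be analytic at 0 ∈ ℂ with ord₀ y₀ = m, and set φ(t) = (t^n, y₀(t)). Let X₁, Y₁ be analytic at (0,0) ∈ ℂ² such that Y₁ vanishes to order at least 2 at (0,0) and the one-variable function x ↦ X₁(x,0) vanishes to order at least 2 at 0, and define X_i inductively by X_{i+1} = (∂X_i/∂x)·X₁ + (∂X_i/∂y)·Y₁. Then for every i ≥ 1 there is a function h_i analytic at 0 ∈ ℂ with X_i(φ(t)) = t^{n+1} h_i(t); in particular, if X_i∘φ is not identically zero then ord₀(X_i∘φ) > n. -/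
open Filter Asymptotics

/-- `t^m = o(t^n)` near `0` when `n < m`. -/
lemma pow_isLittleO_pow {n m : ℕ} (h : n < m) :
    (fun t : ℂ => t ^ m) =o[nhds 0] fun t : ℂ => t ^ n := by
  have heq : (fun t : ℂ => t ^ m) = fun t : ℂ => t ^ (m - n) * t ^ n := by
    funext t; rw [← pow_add, Nat.sub_add_cancel h.le]
  rw [heq]
  have h1 : (fun t : ℂ => t ^ (m - n)) =o[nhds 0] (fun _ : ℂ => (1 : ℂ)) := by
    rw [isLittleO_one_iff]
    have := (continuous_pow (m - n)).tendsto (0 : ℂ)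
    simpa [zero_pow (Nat.sub_ne_zero_of_lt h)] using this
  simpa using h1.mul_isBigO (isBigO_refl (fun t : ℂ => t ^ n) _)

/-- One-variable factorization: an analytic function that is `o(t^n)` at `0`
factors as `t^(n+1) * h` with `h` analytic. -/
lemma factor_of_isLittleO {n : ℕ} {f : ℂ → ℂ} (hf : AnalyticAt ℂ f 0)
    (ho : f =o[nhds 0] fun t : ℂ => t ^ n) :
    ∃ h : ℂ → ℂ, AnalyticAt ℂ h 0 ∧ ∀ᶠ t in nhds (0 : ℂ), f t = t ^ (n + 1) * h t := by
  rcases eq_or_ne (analyticOrderAt f 0) ⊤ with htop | hfin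
  · refine ⟨0, analyticAt_const, ?_⟩
    filter_upwards [analyticOrderAt_eq_top.mp htop] with t ht
    simp [ht]
  · lift analyticOrderAt f 0 to ℕ using hfin with k hk
    obtain ⟨G, hGan, hG0, hGeq⟩ := (hf.analyticOrderAt_eq_natCast (n := k)).mp hk.symm
    have hGeq' : ∀ᶠ t in nhds (0 : ℂ), f t = t ^ k * G t := by
      filter_upwards [hGeq] with t ht; simpa using ht
    -- show n + 1 ≤ k
    have hle : n + 1 ≤ k := by
      by_contra hcon
      push_neg at hcon
      have hkn : k ≤ n := Nat.lt_succ_iff.mp hcon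
      -- t^n = O(t^k) near 0
      have hbig : (fun t : ℂ => t ^ n) =O[nhds 0] fun t : ℂ => t ^ k := by
        refine IsBigO.of_bound 1 ?_
        filter_upwards [Metric.ball_mem_nhds (0 : ℂ) one_pos] with t ht
        simp only [mem_ball_iff_norm, sub_zero] at ht
        simp only [norm_pow, one_mul]
        exact pow_le_pow_of_le_one (norm_nonneg t) ht.le hkn
      have ho' : f =o[nhdsWithin 0 {(0:ℂ)}ᶜ] fun t : ℂ => t ^ k :=
        (ho.trans_isBigO hbig).mono nhdsWithin_le_nhds
      have hg' : G =ᶠ[nhdsWithin (0:ℂ) {(0:ℂ)}ᶜ] fun t => f t / t ^ k := by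
        filter_upwards [hGeq'.filter_mono nhdsWithin_le_nhds,
          self_mem_nhdsWithin] with t ht ht0
        rw [ht, mul_div_cancel_left₀ _ (pow_ne_zero k ht0)]
      have hnz : ∀ᶠ t in nhdsWithin (0:ℂ) {(0:ℂ)}ᶜ, t ^ k = 0 → f t = 0 := by
        filter_upwards [self_mem_nhdsWithin] with t ht0 habs
        exact absurd habs (pow_ne_zero k ht0)
      have htend : Tendsto (fun t => f t / t ^ k) (nhdsWithin (0:ℂ) {(0:ℂ)}ᶜ) (nhds 0) :=
        (isLittleO_iff_tendsto' hnz).mp ho'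
      have htendG : Tendsto G (nhdsWithin (0:ℂ) {(0:ℂ)}ᶜ) (nhds (G 0)) :=
        hGan.continuousAt.continuousWithinAt.tendsto
      have : G 0 = 0 := tendsto_nhds_unique htendG (htend.congr' hg'.symm)
      exact hG0 this
    refine ⟨fun t => t ^ (k - (n + 1)) * G t, ((analyticAt_id).pow _).mul hGan, ?_⟩
    filter_upwards [hGeq'] with t ht
    rw [ht, ← mul_assoc, ← pow_add, Nat.add_sub_cancel' hle]

/-- Along the branch `φ(t) = (t^n, y₀(t))` (with `ord₀ y₀ = m > n`), every iterate
`X_i` of the scheme `X_{i+1} = (∂X_i/∂x)·X₁ + (∂X_i/∂y)·Y₁` satisfies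
`X_i(φ(t)) = t^{n+1} h_i(t)` for some analytic `h_i`; in particular its order is `> n`. -/
theorem Xi_along_branch_order_gt_n
    (n m : ℕ) (hn : 0 < n) (hnm : n < m)
    (y₀ : ℂ → ℂ) (hy₀ : AnalyticAt ℂ y₀ 0)
    (g : ℂ → ℂ) (hg : AnalyticAt ℂ g 0) (hg0 : g 0 ≠ 0)
    (hy₀eq : ∀ᶠ t in nhds (0 : ℂ), y₀ t = t ^ m * g t)
    (X₁ Y₁ : ℂ × ℂ → ℂ)
    (hX₁ : AnalyticAt ℂ X₁ 0) (hY₁ : AnalyticAt ℂ Y₁ 0)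
    (hY₁0 : Y₁ 0 = 0) (hY₁d : fderiv ℂ Y₁ 0 = 0)
    (hX₁0 : X₁ 0 = 0) (hX₁x : deriv (fun x : ℂ => X₁ (x, 0)) 0 = 0)
    (X : ℕ → ℂ × ℂ → ℂ) (hX1 : X 1 = X₁)
    (hrec : ∀ i : ℕ, 1 ≤ i → ∀ p : ℂ × ℂ,
      X (i + 1) p = fderiv ℂ (X i) p (1, 0) * X₁ p + fderiv ℂ (X i) p (0, 1) * Y₁ p) :
    ∀ i : ℕ, 1 ≤ i → ∃ h : ℂ → ℂ, AnalyticAt ℂ h 0 ∧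
      ∀ᶠ t in nhds (0 : ℂ), X i (t ^ n, y₀ t) = t ^ (n + 1) * h t := by
  have hn0 : n ≠ 0 := hn.ne'
  have hm0 : m ≠ 0 := (hn.trans hnm).ne'
  have hy00 : y₀ 0 = 0 := by
    have := hy₀eq.self_of_nhds
    simpa [zero_pow hm0] using this
  set φ : ℂ → ℂ × ℂ := fun t => (t ^ n, y₀ t) with hφdef
  have hφ : AnalyticAt ℂ φ 0 := ((analyticAt_id).pow n).prod hy₀
  have hφ0 : φ 0 = 0 := by
    simp [hφdef, zero_pow hn0, hy00, Prod.ext_iff]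
  have hφt : Tendsto φ (nhds 0) (nhds (0 : ℂ × ℂ)) := by
    have := hφ.continuousAt.tendsto
    rwa [hφ0] at this
  -- y₀ = o(t^n)
  have hy₀o : y₀ =o[nhds 0] fun t : ℂ => t ^ n := by
    have hgO : g =O[nhds (0:ℂ)] (fun _ => (1:ℂ)) := hg.continuousAt.tendsto.isBigO_one ℂ
    have := (pow_isLittleO_pow hnm).mul_isBigO hgO
    have hyEE : y₀ =ᶠ[nhds (0:ℂ)] fun t => t ^ m * g t := hy₀eq
    refine hyEE.trans_isLittleO ?_
    simpa using this
  -- φ = O(t^n)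
  have hφO : φ =O[nhds 0] fun t : ℂ => t ^ n :=
    IsBigO.prod_left (isBigO_refl _ _) hy₀o.isBigO
  -- Y₁ ∘ φ = o(t^n)
  have hYo : (fun t => Y₁ (φ t)) =o[nhds 0] fun t : ℂ => t ^ n := by
    have hd : HasFDerivAt Y₁ 0 0 := hY₁d ▸ hY₁.differentiableAt.hasFDerivAt
    have hlittle : Y₁ =o[nhds (0 : ℂ × ℂ)] fun p => p := by
      have := hasFDerivAt_iff_isLittleO_nhds_zero.mp hd
      simpa [hY₁0] using this
    exact (hlittle.comp_tendsto hφt).trans_isBigO hφO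
  -- X₁ ∘ φ = o(t^n)
  have hXo : (fun t => X₁ (φ t)) =o[nhds 0] fun t : ℂ => t ^ n := by
    set u : ℂ → ℂ := fun x => X₁ (x, 0) with hudef
    have hu0 : u 0 = 0 := by
      show X₁ ((0:ℂ), (0:ℂ)) = 0
      simpa [Prod.mk_zero_zero] using hX₁0
    have huan : AnalyticAt ℂ u 0 := by
      have h2 : AnalyticAt ℂ (fun x : ℂ => (x, (0:ℂ))) 0 := (analyticAt_id).prod analyticAt_const
      exact hX₁.comp_of_eq h2 (by simp [Prod.ext_iff])
    have hud : HasDerivAt u 0 0 := by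
      have := huan.differentiableAt.hasDerivAt
      rwa [hX₁x] at this
    have hulittle : u =o[nhds 0] fun x : ℂ => x := by
      have := hasDerivAt_iff_isLittleO.mp hud
      simpa [hu0] using this
    have hpn : Tendsto (fun t : ℂ => t ^ n) (nhds 0) (nhds 0) := by
      have := (continuous_pow n).tendsto (0 : ℂ)
      simpa [zero_pow hn0] using this
    have huo : (fun t : ℂ => u (t ^ n)) =o[nhds 0] fun t : ℂ => t ^ n :=
      hulittle.comp_tendsto hpn
    -- Lipschitz control of the difference
    obtain ⟨K, s, hs, hK⟩ := hX₁.contDiffAt.exists_lipschitzOnWith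
    have hψt : Tendsto (fun t : ℂ => ((t ^ n : ℂ), (0:ℂ))) (nhds 0) (nhds (0 : ℂ × ℂ)) := by
      rw [show (0 : ℂ × ℂ) = ((0:ℂ), (0:ℂ)) from rfl]
      exact hpn.prodMk_nhds tendsto_const_nhds
    have hdiffO : (fun t => X₁ (φ t) - X₁ (t ^ n, 0)) =O[nhds 0] y₀ := by
      refine IsBigO.of_bound K ?_
      filter_upwards [hφt.eventually hs, hψt.eventually hs] with t h1 h2
      have hd := hK.dist_le_mul _ h1 _ h2
      rw [dist_eq_norm, dist_eq_norm] at hd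
      refine hd.trans ?_
      have : (φ t - ((t ^ n : ℂ), (0:ℂ))) = ((0:ℂ), y₀ t) := by
        simp [hφdef, Prod.ext_iff]
      rw [this]
      simp [Prod.norm_def]
    have hdiffo : (fun t => X₁ (φ t) - X₁ (t ^ n, 0)) =o[nhds 0] fun t : ℂ => t ^ n :=
      hdiffO.trans_isLittleO hy₀o
    have := hdiffo.add huo
    refine this.congr_left fun t => ?_
    simp [hudef]
  -- analyticity of compositions along φ
  have hXφan : AnalyticAt ℂ (fun t => X₁ (φ t)) 0 := hX₁.comp_of_eq hφ hφ0
  have hYφan : AnalyticAt ℂ (fun t => Y₁ (φ t)) 0 := hY₁.comp_of_eq hφ hφ0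
  obtain ⟨hA, hAan, hAeq⟩ := factor_of_isLittleO hXφan hXo
  obtain ⟨hB, hBan, hBeq⟩ := factor_of_isLittleO hYφan hYo
  -- analyticity of each X i at 0
  have hXan : ∀ i : ℕ, 1 ≤ i → AnalyticAt ℂ (X i) 0 := by
    intro i hi
    induction i, hi using Nat.le_induction with
    | base => rw [hX1]; exact hX₁
    | succ i hi ih =>
      have hXeq : X (i + 1) = fun p =>
          fderiv ℂ (X i) p (1, 0) * X₁ p + fderiv ℂ (X i) p (0, 1) * Y₁ p :=
        funext (hrec i hi)
      rw [hXeq]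
      have hfd : ∀ v : ℂ × ℂ, AnalyticAt ℂ (fun p => fderiv ℂ (X i) p v) 0 := fun v =>
        ((ContinuousLinearMap.apply ℂ ℂ v).analyticAt _).comp ih.fderiv
      exact ((hfd (1, 0)).mul hX₁).add ((hfd (0, 1)).mul hY₁)
  -- main induction
  intro i hi
  induction i, hi using Nat.le_induction with
  | base =>
    refine ⟨hA, hAan, ?_⟩
    rw [hX1]
    exact hAeq
  | succ i hi ih =>
    have hfd : ∀ v : ℂ × ℂ, AnalyticAt ℂ (fun t => fderiv ℂ (X i) (φ t) v) 0 := by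
      intro v
      exact ((ContinuousLinearMap.apply ℂ ℂ v).analyticAt _).comp
        (((hXan i hi).fderiv).comp_of_eq hφ hφ0)
    refine ⟨fun t => fderiv ℂ (X i) (φ t) (1, 0) * hA t + fderiv ℂ (X i) (φ t) (0, 1) * hB t,
      ((hfd (1, 0)).mul hAan).add ((hfd (0, 1)).mul hBan), ?_⟩
    filter_upwards [hAeq, hBeq] with t h1 h2
    have := hrec i hi (φ t)
    rw [show ((t:ℂ) ^ n, y₀ t) = φ t from rfl, this, h1, h2]
    ring
end

section
/- (Rigidity of Puiseux families) Let n ≥ 1, let y₀ be analytic at 0 ∈ ℂ with y₀(0) = 0, and suppose φ(t) = (t^n, y₀(t)) is injective on a neighbourhood V of 0 ∈ ℂ. Let Ȳ(u,s) be analytic on a neighbourhood of (0,0) ∈ ℂ² such that Ȳ(u,0) = y₀(u) for all u near 0 and such that for every (u,s) near (0,0) the point (u^n, Ȳ(u,s)) belongs to φ(V). Then Ȳ(u,s) = y₀(u) for all (u,s) in a neighbourhood of (0,0); that is, the family is independent of the parameter s. -/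
open Filter

/-- **Rigidity of Puiseux families.** If `Ȳ(u,s)` is an analytic family with
`Ȳ(u,0) = y₀(u)` such that every point `(u^n, Ȳ(u,s))` lies on the injectively
parametrized branch `φ(t) = (t^n, y₀(t))`, then `Ȳ` does not depend on `s`. -/
theorem rigidity_of_puiseux_families
    (n : ℕ) (hn : 1 ≤ n)
    (y₀ : ℂ → ℂ) (hy₀ : AnalyticAt ℂ y₀ 0) (hy₀0 : y₀ 0 = 0)
    (V : Set ℂ) (hV : V ∈ nhds (0 : ℂ))
    (hinj : Set.InjOn (fun t : ℂ => ((t ^ n : ℂ), y₀ t)) V)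
    (Yb : ℂ × ℂ → ℂ) (hYb : AnalyticAt ℂ Yb 0)
    (hYb0 : ∀ᶠ u in nhds (0 : ℂ), Yb (u, 0) = y₀ u)
    (hmem : ∀ᶠ p in nhds (0 : ℂ × ℂ),
      ((p.1 ^ n : ℂ), Yb p) ∈ (fun t : ℂ => ((t ^ n : ℂ), y₀ t)) '' V) :
    ∀ᶠ p in nhds (0 : ℂ × ℂ), Yb p = y₀ p.1 := by
  have hYbA : ∀ᶠ p in nhds (0 : ℂ × ℂ), AnalyticAt ℂ Yb p := hYb.eventually_analyticAt
  obtain ⟨r₁, hr₁, H1⟩ := Metric.eventually_nhds_iff.mp (hmem.and hYbA)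
  obtain ⟨r₂, hr₂, H2⟩ := Metric.eventually_nhds_iff.mp hYb0
  set r := min r₁ r₂ with hrdef
  have hr : 0 < r := lt_min hr₁ hr₂
  have hball : Metric.ball (0 : ℂ) r ×ˢ Metric.ball (0 : ℂ) r ∈ nhds (0 : ℂ × ℂ) :=
    prod_mem_nhds (Metric.ball_mem_nhds _ hr) (Metric.ball_mem_nhds _ hr)
  refine eventually_of_mem hball ?_
  rintro ⟨u, s⟩ ⟨hu, hs⟩
  simp only [Metric.mem_ball, dist_zero_right] at hu hs
  -- membership of (u, s') in the ball of radius r₁ around (0,0)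
  have hmem₁ : ∀ s' : ℂ, ‖s'‖ < r → dist ((u, s') : ℂ × ℂ) 0 < r₁ := by
    intro s' hs'
    have : dist ((u, s') : ℂ × ℂ) 0 = max (dist u 0) (dist s' 0) := Prod.dist_eq
    rw [this, dist_zero_right, dist_zero_right]
    exact lt_of_lt_of_le (max_lt hu hs') (min_le_left _ _)
  -- the finite target set
  have hfin : ({t : ℂ | t ∈ V ∧ t ^ n = u ^ n}).Finite := by
    have hsub : {t : ℂ | t ∈ V ∧ t ^ n = u ^ n} ⊆ ↑((Polynomial.nthRoots n (u ^ n)).toFinset) := by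
      intro t ht
      simp only [Multiset.mem_toFinset, Finset.coe_sort_coe, Multiset.mem_coe,
        Finset.mem_coe]
      rw [Polynomial.mem_nthRoots (by omega : 0 < n)]
      exact ht.2
    exact Set.Finite.subset ((Polynomial.nthRoots n (u ^ n)).toFinset.finite_toSet) hsub
  set T : Set ℂ := y₀ '' {t : ℂ | t ∈ V ∧ t ^ n = u ^ n} with hT
  have hTfin : T.Finite := hfin.image _
  haveI : Finite T := hTfin.to_subtype
  haveI : DiscreteTopology T := Finite.instDiscreteTopology
  -- the slice function
  set g : ℂ → ℂ := fun s' => Yb (u, s') with hg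
  have hgc : ContinuousOn g (Metric.ball (0 : ℂ) r) := by
    intro s' hs'
    simp only [Metric.mem_ball, dist_zero_right] at hs'
    have := (H1 (y := (u, s')) (hmem₁ s' hs')).2
    exact ((this.comp ((analyticAt_const).prod analyticAt_id)).continuousAt).continuousWithinAt
  have hmaps : Set.MapsTo g (Metric.ball (0 : ℂ) r) T := by
    intro s' hs'
    simp only [Metric.mem_ball, dist_zero_right] at hs'
    obtain ⟨t, htV, hteq⟩ := (H1 (y := (u, s')) (hmem₁ s' hs')).1
    simp only [Prod.mk.injEq] at hteq
    exact ⟨t, ⟨htV, hteq.1⟩, hteq.2⟩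
  have hpre : IsPreconnected (Metric.ball (0 : ℂ) r) := (convex_ball 0 r).isPreconnected
  have h0 : (0 : ℂ) ∈ Metric.ball (0 : ℂ) r := Metric.mem_ball_self hr
  have hs' : s ∈ Metric.ball (0 : ℂ) r := by simpa [Metric.mem_ball, dist_zero_right] using hs
  have hconst : g s = g 0 := hpre.constant_of_mapsTo hTfin.isDiscrete hgc hmaps hs' h0
  have h20 : Yb (u, 0) = y₀ u := H2 (by rw [dist_zero_right]; exact hu.trans_le (min_le_right _ _))
  simpa [hg, h20] using hconst
end
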